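/- Mackey formula with involutions: Let K ⊆ H be subgroups of a finite group G, ρ an irreducible complex representation of K, ϑ an H-orbit of order-two automorphisms of G, and χ = (χ_θ)_{θ∈ϑ} a compatible family of characters χ_θ : H^θ → ℂ×. Then dim Hom_{H^θ}(Ind_K^H ρ, χ_θ) = Σ_ξ m_K^H(ξ) · dim Hom_{K ∩ H^{θ'}}(ρ, χ_{θ'}), where ξ runs over the K-orbits contained in ϑ, θ' is any element of ξ, and m_K^H(ξ) = [H_{θ'} : (K ∩ H_{θ'})H^{θ'}]. -/

import Mathlib

namespace Stmt7

variable {G : Type*} [Group G]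

/-- The action of `g` on automorphisms: `(g · θ)(h) = g θ(g⁻¹ h g) g⁻¹`. -/
def conjAct (g : G) (θ : MulAut G) : MulAut G := MulAut.conj g * θ * (MulAut.conj g)⁻¹

/-- The fixed points `G^θ` of `θ`, as a subgroup. -/
def fixedSub (θ : MulAut G) : Subgroup G where
  carrier := {g | θ g = g}
  one_mem' := map_one θ
  mul_mem' := by
    intro a b ha hb
    simp only [Set.mem_setOf_eq, map_mul] at *
    rw [ha, hb]
  inv_mem' := by
    intro a ha
    simp only [Set.mem_setOf_eq, map_inv] at *
    rw [ha]

/-- The stabilizer `G_θ = {g : g · θ = θ}` of `θ` under the conjugation action. -/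
def stabSub (θ : MulAut G) : Subgroup G where
  carrier := {g | conjAct g θ = θ}
  one_mem' := by simp [conjAct]
  mul_mem' := by
    intro a b ha hb
    simp only [Set.mem_setOf_eq, conjAct, map_mul, mul_inv_rev] at *
    calc MulAut.conj a * MulAut.conj b * θ * ((MulAut.conj b)⁻¹ * (MulAut.conj a)⁻¹)
        = MulAut.conj a * (MulAut.conj b * θ * (MulAut.conj b)⁻¹) * (MulAut.conj a)⁻¹ := by
          group
      _ = θ := by rw [hb]; exact ha
  inv_mem' := by
    intro a ha
    simp only [Set.mem_setOf_eq, conjAct, map_inv, inv_inv] at *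
    rw [mul_inv_eq_iff_eq_mul] at ha
    rw [mul_assoc, ← ha, inv_mul_cancel_left]


/-- `m_K^H(θ) = [H_θ : (K ∩ H_θ)H^θ]`. -/
noncomputable def m (θ : MulAut G) (K H : Subgroup G) : ℕ :=
  ((K ⊓ stabSub θ) ⊔ (H ⊓ fixedSub θ)).relIndex (H ⊓ stabSub θ)

variable {V : Type*} [AddCommGroup V] [Module ℂ V]

/-- The space of the induced representation `Ind_K^H ρ`, realized as functions
`f : H → V` with `f(kh) = ρ(k) f(h)`. -/
noncomputable def IndSpace (K H : Subgroup G) (hKH : K ≤ H) (ρ : ↥K →* (V →ₗ[ℂ] V)) :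
    Submodule ℂ (↥H → V) where
  carrier := {f | ∀ (k : ↥K) (h : ↥H),
    f ⟨(k : G) * (h : G), H.mul_mem (hKH k.2) h.2⟩ = ρ k (f h)}
  add_mem' := by
    intro a b ha hb k h
    simp only [Pi.add_apply, ha k h, hb k h, map_add]
  zero_mem' := by intro k h; simp
  smul_mem' := by
    intro c a ha k h
    simp only [Pi.smul_apply, ha k h, map_smul]

/-- The right-translation action of `s ∈ H` on the induced space. -/
noncomputable def rTrans (K H : Subgroup G) (hKH : K ≤ H) (ρ : ↥K →* (V →ₗ[ℂ] V))
    (s : G) (hs : s ∈ H) (f : ↥(IndSpace K H hKH ρ)) : ↥(IndSpace K H hKH ρ) :=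
  ⟨fun h => (f : ↥H → V) ⟨(h : G) * s, H.mul_mem h.2 hs⟩, by
    intro k h
    have h2 : (f : ↥H → V) ⟨(k : G) * ((h : G) * s), H.mul_mem (hKH k.2) (H.mul_mem h.2 hs)⟩
        = ρ k ((f : ↥H → V) ⟨(h : G) * s, H.mul_mem h.2 hs⟩) := f.2 k ⟨(h : G) * s, H.mul_mem h.2 hs⟩
    simpa [mul_assoc] using h2⟩

/-- `Hom_{H^{θ'}}(Ind_K^H ρ, χ_{θ'})`: linear forms on the induced space which are
`(H^{θ'}, χ_{θ'})`-equivariant for the right-translation action. -/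
noncomputable def HomInd (K H : Subgroup G) (hKH : K ≤ H) (ρ : ↥K →* (V →ₗ[ℂ] V))
    (θ' : MulAut G) (c : G → ℂ) :
    Submodule ℂ ((↥(IndSpace K H hKH ρ)) →ₗ[ℂ] ℂ) where
  carrier := {l | ∀ (s : G) (hs : s ∈ H), θ' s = s → ∀ f : ↥(IndSpace K H hKH ρ),
      l (rTrans K H hKH ρ s hs f) = c s * l f}
  add_mem' := by
    intro a b ha hb s hs hfix f
    simp only [LinearMap.add_apply, ha s hs hfix f, hb s hs hfix f]
    ring
  zero_mem' := by intro s hs hfix f; simp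
  smul_mem' := by
    intro r a ha s hs hfix f
    simp only [LinearMap.smul_apply, smul_eq_mul, ha s hs hfix f]
    ring

/-- `Hom_{K ∩ H^{θ'}}(ρ, χ_{θ'})`: linear forms on `V` which are equivariant for
`K ∩ H^{θ'}`. -/
noncomputable def HomK (K H : Subgroup G) (ρ : ↥K →* (V →ₗ[ℂ] V)) (θ' : MulAut G) (c : G → ℂ) :
    Submodule ℂ (V →ₗ[ℂ] ℂ) where
  carrier := {l | ∀ k : ↥K, (k : G) ∈ H → θ' (k : G) = (k : G) →
      ∀ v : V, l (ρ k v) = c k * l v}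
  add_mem' := by
    intro a b ha hb k hkH hk v
    simp only [LinearMap.add_apply, ha k hkH hk v, hb k hkH hk v]
    ring
  zero_mem' := by intro k hkH hk v; simp
  smul_mem' := by
    intro r a ha k hkH hk v
    simp only [LinearMap.smul_apply, smul_eq_mul, ha k hkH hk v]
    ring

/-! ### Auxiliary development for the Mackey formula -/

section AuxA

attribute [local instance] Classical.propDecidable

lemma conjAct_apply (g : G) (θ : MulAut G) (x : G) :
    conjAct g θ x = g * θ (g⁻¹ * x * g) * g⁻¹ := rfl

lemma conjAct_one (θ : MulAut G) : conjAct 1 θ = θ := by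
  ext x; simp [conjAct_apply]

lemma conjAct_mul (a b : G) (θ : MulAut G) :
    conjAct (a * b) θ = conjAct a (conjAct b θ) := by
  ext x; simp only [conjAct_apply, map_mul, map_inv, mul_inv_rev]; group

lemma conjAct_inv_cancel (h : G) (θ : MulAut G) : conjAct h⁻¹ (conjAct h θ) = θ := by
  rw [← conjAct_mul, inv_mul_cancel, conjAct_one]

lemma conjAct_cancel_inv (h : G) (θ : MulAut G) : conjAct h (conjAct h⁻¹ θ) = θ := by
  rw [← conjAct_mul, mul_inv_cancel, conjAct_one]

lemma mem_fixedSub {θ : MulAut G} {x : G} : x ∈ fixedSub θ ↔ θ x = x := Iff.rfl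

lemma mem_stabSub {θ : MulAut G} {x : G} : x ∈ stabSub θ ↔ conjAct x θ = θ := Iff.rfl

lemma fixedSub_le_stabSub (θ : MulAut G) : fixedSub θ ≤ stabSub θ := by
  intro u hu
  rw [mem_fixedSub] at hu
  rw [mem_stabSub]
  ext x
  rw [conjAct_apply, map_mul, map_mul, map_inv, hu]
  group

lemma stab_apply {θ : MulAut G} {g : G} (hg : g ∈ stabSub θ) (x : G) :
    θ (g⁻¹ * x * g) = g⁻¹ * θ x * g := by
  have h1 : conjAct g θ = θ := hg
  have h2 : conjAct g θ x = θ x := by rw [h1]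
  rw [conjAct_apply] at h2
  rw [← h2]; group

lemma stab_conj_fixed {ψ : MulAut G} {x u : G} (hx : x ∈ stabSub ψ) (hu : u ∈ fixedSub ψ) :
    x * u * x⁻¹ ∈ fixedSub ψ := by
  rw [mem_fixedSub]
  have h := stab_apply hx (x * u * x⁻¹)
  have h2 : x⁻¹ * (x * u * x⁻¹) * x = u := by group
  rw [h2, mem_fixedSub.mp hu] at h
  -- h : u = x⁻¹ * ψ (x * u * x⁻¹) * x
  have h3 : x * u * x⁻¹ = x * (x⁻¹ * ψ (x * u * x⁻¹) * x) * x⁻¹ := by rw [← h]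
  have h4 : x * (x⁻¹ * ψ (x * u * x⁻¹) * x) * x⁻¹ = ψ (x * u * x⁻¹) := by group
  exact (h3.trans h4).symm

lemma conj_mem_stab {θ : MulAut G} {u : G} (hu : u ∈ stabSub θ) (h : G) :
    h * u * h⁻¹ ∈ stabSub (conjAct h θ) := by
  rw [mem_stabSub]
  calc conjAct (h * u * h⁻¹) (conjAct h θ)
      = conjAct (h * u) (conjAct h⁻¹ (conjAct h θ)) := conjAct_mul _ _ _
    _ = conjAct h (conjAct u θ) := by rw [conjAct_inv_cancel, conjAct_mul]
    _ = conjAct h θ := by rw [mem_stabSub.mp hu]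

lemma conj_mem_fixed {θ : MulAut G} {u : G} (hu : u ∈ fixedSub θ) (h : G) :
    h * u * h⁻¹ ∈ fixedSub (conjAct h θ) := by
  rw [mem_fixedSub, conjAct_apply]
  have h2 : h⁻¹ * (h * u * h⁻¹) * h = u := by group
  rw [h2, mem_fixedSub.mp hu]

variable (K H : Subgroup G)

/-- The double coset relation on `H` relative to `K` and `H ∩ H^θ`. -/
def dcRel (θ : MulAut G) (h₁ h₂ : ↥H) : Prop :=
  ∃ k ∈ K, ∃ t ∈ H, θ t = t ∧ (h₂ : G) = k * h₁ * t

lemma dcRel_refl (θ : MulAut G) (h : ↥H) : dcRel K H θ h h :=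
  ⟨1, one_mem K, 1, one_mem H, map_one θ, by group⟩

lemma dcRel_symm {θ : MulAut G} {h₁ h₂ : ↥H} (h : dcRel K H θ h₁ h₂) : dcRel K H θ h₂ h₁ := by
  obtain ⟨k, hk, t, ht, hθt, heq⟩ := h
  refine ⟨k⁻¹, inv_mem hk, t⁻¹, inv_mem ht, by rw [map_inv, hθt], ?_⟩
  rw [heq]; group

lemma dcRel_trans {θ : MulAut G} {h₁ h₂ h₃ : ↥H} (h : dcRel K H θ h₁ h₂)
    (h' : dcRel K H θ h₂ h₃) : dcRel K H θ h₁ h₃ := by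
  obtain ⟨k, hk, t, ht, hθt, heq⟩ := h
  obtain ⟨k', hk', t', ht', hθt', heq'⟩ := h'
  refine ⟨k' * k, mul_mem hk' hk, t * t', mul_mem ht ht', by rw [map_mul, hθt, hθt'], ?_⟩
  rw [heq', heq]; group

/-- The setoid of `(K, H ∩ H^θ)` double cosets in `H`. -/
def dcSetoid (θ : MulAut G) : Setoid ↥H :=
  ⟨dcRel K H θ, fun h => dcRel_refl K H θ h, dcRel_symm K H, dcRel_trans K H⟩

/-- The type of `(K, H ∩ H^θ)` double cosets in `H`. -/
abbrev QT (θ : MulAut G) : Type _ := Quotient (dcSetoid K H θ)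

noncomputable instance (θ : MulAut G) [Fintype G] : Fintype (QT K H θ) :=
  @Quotient.fintype _ _ (dcSetoid K H θ) (fun _ _ => Classical.propDecidable _)

/-- The orbit of `θ` under the conjugation action of `H`. -/
def OrbSet (θ : MulAut G) : Set (MulAut G) := {ψ : MulAut G | ∃ h ∈ H, ψ = conjAct h θ}

lemma theta_mem_orb (θ : MulAut G) : θ ∈ OrbSet H θ :=
  ⟨1, one_mem H, (conjAct_one θ).symm⟩

lemma conj_mem_orb {θ φ : MulAut G} (hφ : φ ∈ OrbSet H θ) {h : G} (hh : h ∈ H) :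
    conjAct h φ ∈ OrbSet H θ := by
  obtain ⟨a, ha, rfl⟩ := hφ
  exact ⟨h * a, mul_mem hh ha, (conjAct_mul h a θ).symm⟩

section Chi

variable {H}
variable {θ : MulAut G} {χ : MulAut G → G → ℂ}
variable (hchar : ∀ φ ∈ OrbSet H θ, ∀ a b : G, a ∈ H → φ a = a → b ∈ H → φ b = b →
  χ φ (a * b) = χ φ a * χ φ b ∧ χ φ a ≠ 0)

include hchar

lemma chi_one {φ : MulAut G} (hφ : φ ∈ OrbSet H θ) : χ φ 1 = 1 := by
  have h := hchar φ hφ 1 1 (one_mem H) (map_one φ) (one_mem H) (map_one φ)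
  have h2 := h.1
  rw [one_mul] at h2
  exact (mul_left_cancel₀ h.2 (by rw [← h2, mul_one])).symm

lemma chi_inv {φ : MulAut G} (hφ : φ ∈ OrbSet H θ) {t : G} (ht : t ∈ H) (hfix : φ t = t) :
    χ φ t⁻¹ = (χ φ t)⁻¹ := by
  have hinv : φ t⁻¹ = t⁻¹ := by rw [map_inv, hfix]
  have h := (hchar φ hφ t⁻¹ t (inv_mem ht) hinv ht hfix).1
  rw [inv_mul_cancel, chi_one hchar hφ] at h
  exact eq_inv_of_mul_eq_one_left h.symm

lemma chi_ne_zero {φ : MulAut G} (hφ : φ ∈ OrbSet H θ) {t : G} (ht : t ∈ H) (hfix : φ t = t) :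
    χ φ t ≠ 0 :=
  (hchar φ hφ t 1 ht hfix (one_mem H) (map_one φ)).2

end Chi

end AuxA

section AuxB

attribute [local instance] Classical.propDecidable

variable (K H : Subgroup G) (hKH : K ≤ H) (ρ : ↥K →* (V →ₗ[ℂ] V))

/-- The element of the induced space supported on `Ks` with value `ρ(h s⁻¹) v` at `h`. -/
noncomputable def eltF (s : ↥H) (v : V) : ↥(IndSpace K H hKH ρ) :=
  ⟨fun h => if hc : (h : G) * (s : G)⁻¹ ∈ K then ρ ⟨(h : G) * (s : G)⁻¹, hc⟩ v else 0, by
    intro k h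
    dsimp only
    by_cases hc : (h : G) * (s : G)⁻¹ ∈ K
    · have hc' : ((k : G) * (h : G)) * (s : G)⁻¹ ∈ K := by
        have he : ((k : G) * (h : G)) * (s : G)⁻¹ = (k : G) * ((h : G) * (s : G)⁻¹) := by group
        rw [he]; exact mul_mem k.2 hc
      rw [dif_pos hc', dif_pos hc]
      have he2 : (⟨((k : G) * (h : G)) * (s : G)⁻¹, hc'⟩ : ↥K) = k * ⟨(h : G) * (s : G)⁻¹, hc⟩ :=
        Subtype.ext (by push_cast; group)
      rw [he2, map_mul]
      rfl
    · have hc' : ¬ (((k : G) * (h : G)) * (s : G)⁻¹ ∈ K) := by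
        intro hmem
        apply hc
        have he : (h : G) * (s : G)⁻¹ = (k : G)⁻¹ * (((k : G) * (h : G)) * (s : G)⁻¹) := by
          group
        rw [he]; exact mul_mem (inv_mem k.2) hmem
      rw [dif_neg hc', dif_neg hc, map_zero]⟩

/-- `eltF` as a linear map in `v`. -/
noncomputable def eltFL (s : ↥H) : V →ₗ[ℂ] ↥(IndSpace K H hKH ρ) where
  toFun v := eltF K H hKH ρ s v
  map_add' v w := by
    apply Subtype.ext; funext h
    show (if hc : (h : G) * (s : G)⁻¹ ∈ K then ρ ⟨(h : G) * (s : G)⁻¹, hc⟩ (v + w) else 0)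
       = (if hc : (h : G) * (s : G)⁻¹ ∈ K then ρ ⟨(h : G) * (s : G)⁻¹, hc⟩ v else 0)
       + (if hc : (h : G) * (s : G)⁻¹ ∈ K then ρ ⟨(h : G) * (s : G)⁻¹, hc⟩ w else 0)
    by_cases hc : (h : G) * (s : G)⁻¹ ∈ K
    · rw [dif_pos hc, dif_pos hc, dif_pos hc, map_add]
    · rw [dif_neg hc, dif_neg hc, dif_neg hc, add_zero]
  map_smul' c v := by
    apply Subtype.ext; funext h
    show (if hc : (h : G) * (s : G)⁻¹ ∈ K then ρ ⟨(h : G) * (s : G)⁻¹, hc⟩ (c • v) else 0)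
       = c • (if hc : (h : G) * (s : G)⁻¹ ∈ K then ρ ⟨(h : G) * (s : G)⁻¹, hc⟩ v else 0)
    by_cases hc : (h : G) * (s : G)⁻¹ ∈ K
    · rw [dif_pos hc, dif_pos hc, map_smul]
    · rw [dif_neg hc, dif_neg hc, smul_zero]

lemma eltF_left (k : ↥K) (s : ↥H) (v : V) :
    eltF K H hKH ρ ⟨(k : G) * (s : G), mul_mem (hKH k.2) s.2⟩ v
      = eltF K H hKH ρ s (ρ k⁻¹ v) := by
  apply Subtype.ext; funext h
  show (if hc : (h : G) * ((k : G) * (s : G))⁻¹ ∈ K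
          then ρ ⟨(h : G) * ((k : G) * (s : G))⁻¹, hc⟩ v else 0)
     = (if hc : (h : G) * (s : G)⁻¹ ∈ K then ρ ⟨(h : G) * (s : G)⁻¹, hc⟩ (ρ k⁻¹ v) else 0)
  by_cases hc : (h : G) * (s : G)⁻¹ ∈ K
  · have hc' : (h : G) * ((k : G) * (s : G))⁻¹ ∈ K := by
      have he : (h : G) * ((k : G) * (s : G))⁻¹ = ((h : G) * (s : G)⁻¹) * (k : G)⁻¹ := by group
      rw [he]; exact mul_mem hc (inv_mem k.2)
    rw [dif_pos hc', dif_pos hc]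
    have he2 : (⟨(h : G) * ((k : G) * (s : G))⁻¹, hc'⟩ : ↥K) = ⟨(h : G) * (s : G)⁻¹, hc⟩ * k⁻¹ :=
      Subtype.ext (by push_cast; group)
    rw [he2, map_mul]; rfl
  · rw [dif_neg, dif_neg hc]
    intro hmem
    apply hc
    have he : (h : G) * (s : G)⁻¹ = ((h : G) * ((k : G) * (s : G))⁻¹) * (k : G) := by group
    rw [he]; exact mul_mem hmem k.2

lemma eltF_right (s : ↥H) (t : G) (ht : t ∈ H) (v : V) :
    eltF K H hKH ρ ⟨(s : G) * t, mul_mem s.2 ht⟩ v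
      = rTrans K H hKH ρ t⁻¹ (inv_mem ht) (eltF K H hKH ρ s v) := by
  apply Subtype.ext; funext h
  show (if hc : (h : G) * ((s : G) * t)⁻¹ ∈ K
          then ρ ⟨(h : G) * ((s : G) * t)⁻¹, hc⟩ v else 0)
     = (if hc : ((h : G) * t⁻¹) * (s : G)⁻¹ ∈ K
          then ρ ⟨((h : G) * t⁻¹) * (s : G)⁻¹, hc⟩ v else 0)
  have he : (h : G) * ((s : G) * t)⁻¹ = ((h : G) * t⁻¹) * (s : G)⁻¹ := by group
  rw [he]

lemma eltF_fix (s : ↥H) (k : ↥K) (v : V) :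
    eltF K H hKH ρ s (ρ k v)
      = rTrans K H hKH ρ ((s : G)⁻¹ * (k : G) * (s : G))
          (mul_mem (mul_mem (inv_mem s.2) (hKH k.2)) s.2) (eltF K H hKH ρ s v) := by
  apply Subtype.ext; funext h
  show (if hc : (h : G) * (s : G)⁻¹ ∈ K then ρ ⟨(h : G) * (s : G)⁻¹, hc⟩ (ρ k v) else 0)
     = (if hc : ((h : G) * ((s : G)⁻¹ * (k : G) * (s : G))) * (s : G)⁻¹ ∈ K
          then ρ ⟨((h : G) * ((s : G)⁻¹ * (k : G) * (s : G))) * (s : G)⁻¹, hc⟩ v else 0)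
  have he : ((h : G) * ((s : G)⁻¹ * (k : G) * (s : G))) * (s : G)⁻¹
      = ((h : G) * (s : G)⁻¹) * (k : G) := by group
  rw [he]
  by_cases hc : (h : G) * (s : G)⁻¹ ∈ K
  · have hc' : ((h : G) * (s : G)⁻¹) * (k : G) ∈ K := mul_mem hc k.2
    rw [dif_pos hc, dif_pos hc']
    have he2 : (⟨((h : G) * (s : G)⁻¹) * (k : G), hc'⟩ : ↥K) = ⟨(h : G) * (s : G)⁻¹, hc⟩ * k :=
      Subtype.ext (by push_cast; group)
    rw [he2, map_mul]; rfl
  · rw [dif_neg hc, dif_neg]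
    intro hmem
    apply hc
    have he2 : (h : G) * (s : G)⁻¹ = (((h : G) * (s : G)⁻¹) * (k : G)) * (k : G)⁻¹ := by group
    rw [he2]; exact mul_mem hmem (inv_mem k.2)

end AuxB

section AuxC

attribute [local instance] Classical.propDecidable

variable (K H : Subgroup G) (hKH : K ≤ H) (ρ : ↥K →* (V →ₗ[ℂ] V))

lemma exists_decomp (θ : MulAut G) (h : ↥H) : ∃ p : G × G,
    p.1 ∈ K ∧ p.2 ∈ H ∧ θ p.2 = p.2 ∧
      (h : G) = p.1 * ((Quotient.out (Quotient.mk (dcSetoid K H θ) h) : ↥H) : G) * p.2 := by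
  have hrel : dcRel K H θ (Quotient.out (Quotient.mk (dcSetoid K H θ) h)) h :=
    @Quotient.mk_out _ (dcSetoid K H θ) h
  obtain ⟨k, hk, t, ht, hθt, heq⟩ := hrel
  exact ⟨(k, t), hk, ht, hθt, heq⟩

noncomputable def dK (θ : MulAut G) (h : ↥H) : G := (exists_decomp K H θ h).choose.1

noncomputable def dT (θ : MulAut G) (h : ↥H) : G := (exists_decomp K H θ h).choose.2

lemma dK_mem (θ : MulAut G) (h : ↥H) : dK K H θ h ∈ K :=
  (exists_decomp K H θ h).choose_spec.1

lemma dT_mem (θ : MulAut G) (h : ↥H) : dT K H θ h ∈ H :=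
  (exists_decomp K H θ h).choose_spec.2.1

lemma dT_fix (θ : MulAut G) (h : ↥H) : θ (dT K H θ h) = dT K H θ h :=
  (exists_decomp K H θ h).choose_spec.2.2.1

lemma d_eq (θ : MulAut G) (h : ↥H) : (h : G)
    = dK K H θ h * ((Quotient.out (Quotient.mk (dcSetoid K H θ) h) : ↥H) : G) * dT K H θ h :=
  (exists_decomp K H θ h).choose_spec.2.2.2

lemma homK_inv (θ' : MulAut G) (χ' : G → ℂ) (μ : V →ₗ[ℂ] ℂ) (hμ : μ ∈ HomK K H ρ θ' χ')
    {k : G} (hk : k ∈ K) (hkH : k ∈ H) (hfix : θ' k = k) (hne : χ' k ≠ 0) (v : V) :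
    μ (ρ ⟨k⁻¹, inv_mem hk⟩ v) = (χ' k)⁻¹ * μ v := by
  have h1 := hμ ⟨k, hk⟩ hkH hfix (ρ ⟨k⁻¹, inv_mem hk⟩ v)
  have h2 : ρ ⟨k, hk⟩ (ρ ⟨k⁻¹, inv_mem hk⟩ v) = v := by
    rw [← Module.End.mul_apply, ← map_mul]
    have h3 : (⟨k, hk⟩ : ↥K) * ⟨k⁻¹, inv_mem hk⟩ = 1 := Subtype.ext (by push_cast; group)
    rw [h3, map_one, Module.End.one_apply]
  rw [h2] at h1
  rw [h1, ← mul_assoc, inv_mul_cancel₀ hne, one_mul]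

variable (θ : MulAut G) (χ : MulAut G → G → ℂ)

variable (hchar : ∀ φ ∈ OrbSet H θ, ∀ a b : G, a ∈ H → φ a = a → b ∈ H → φ b = b →
  χ φ (a * b) = χ φ a * χ φ b ∧ χ φ a ≠ 0)
variable (hcompat : ∀ φ ∈ OrbSet H θ, ∀ h ∈ H, ∀ k ∈ H, φ k = k →
  χ (conjAct h φ) (h * k * h⁻¹) = χ φ k)

include hKH hchar hcompat in
lemma wd (s : ↥H) (μ : V →ₗ[ℂ] ℂ)
    (hμ : μ ∈ HomK K H ρ (conjAct (s : G) θ) (χ (conjAct (s : G) θ)))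
    {k k' t t' : G} (hk : k ∈ K) (hk' : k' ∈ K) (ht : t ∈ H) (ht' : t' ∈ H)
    (hθt : θ t = t) (hθt' : θ t' = t')
    (heq : k * (s : G) * t = k' * (s : G) * t') (v : V) :
    (χ θ t)⁻¹ * μ (ρ ⟨k⁻¹, inv_mem hk⟩ v) = (χ θ t')⁻¹ * μ (ρ ⟨k'⁻¹, inv_mem hk'⟩ v) := by
  set κ : G := k'⁻¹ * k with hκdef
  have hκK : κ ∈ K := mul_mem (inv_mem hk') hk
  have hκeq : κ = (s : G) * (t' * t⁻¹) * (s : G)⁻¹ := by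
    have h1 : k = k' * ((s : G) * t') * t⁻¹ * (s : G)⁻¹ := by
      rw [show k' * ((s : G) * t') * t⁻¹ * (s : G)⁻¹
            = (k' * (s : G) * t') * t⁻¹ * (s : G)⁻¹ by group, ← heq]
      group
    rw [hκdef, h1]; group
  have hκH : κ ∈ H := mul_mem (inv_mem (hKH hk')) (hKH hk)
  have hfixt : θ (t' * t⁻¹) = t' * t⁻¹ := by rw [map_mul, map_inv, hθt, hθt']
  have hκfix : conjAct (s : G) θ κ = κ := by
    rw [hκeq, conjAct_apply]
    have h2 : (s : G)⁻¹ * ((s : G) * (t' * t⁻¹) * (s : G)⁻¹) * (s : G) = t' * t⁻¹ := by group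
    rw [h2, hfixt]
  have hta : χ θ t ≠ 0 := chi_ne_zero hchar (theta_mem_orb H θ) ht hθt
  have htb : χ θ t' ≠ 0 := chi_ne_zero hchar (theta_mem_orb H θ) ht' hθt'
  have hχκ : χ (conjAct (s : G) θ) κ = χ θ t' * (χ θ t)⁻¹ := by
    have h3 := hcompat θ (theta_mem_orb H θ) (s : G) s.2 (t' * t⁻¹)
      (mul_mem ht' (inv_mem ht)) hfixt
    rw [← hκeq] at h3
    rw [h3, (hchar θ (theta_mem_orb H θ) t' t⁻¹ ht' hθt' (inv_mem ht)
        (by rw [map_inv, hθt])).1,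
      chi_inv hchar (theta_mem_orb H θ) ht hθt]
  have hsplit : (⟨k⁻¹, inv_mem hk⟩ : ↥K) = ⟨κ⁻¹, inv_mem hκK⟩ * ⟨k'⁻¹, inv_mem hk'⟩ :=
    Subtype.ext (by push_cast; rw [hκdef]; group)
  rw [hsplit, map_mul, Module.End.mul_apply]
  rw [homK_inv K H ρ (conjAct (s : G) θ) (χ (conjAct (s : G) θ)) μ hμ hκK hκH hκfix
      (by rw [hχκ]; exact mul_ne_zero htb (inv_ne_zero hta)) (ρ ⟨k'⁻¹, inv_mem hk'⟩ v)]
  rw [hχκ]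
  field_simp

/-- Extension of a compatible family over double cosets to all of `H`. -/
noncomputable def lam
    (μ : ∀ q : QT K H θ, ↥(HomK K H ρ (conjAct ((Quotient.out q : ↥H) : G) θ)
        (χ (conjAct ((Quotient.out q : ↥H) : G) θ)))) (h : ↥H) : V →ₗ[ℂ] ℂ :=
  (χ θ (dT K H θ h))⁻¹ •
    ((μ (Quotient.mk (dcSetoid K H θ) h) : V →ₗ[ℂ] ℂ).comp
      (ρ ⟨(dK K H θ h)⁻¹, inv_mem (dK_mem K H θ h)⟩))

include hKH hchar hcompat in
lemma lam_eq
    (μ : ∀ q : QT K H θ, ↥(HomK K H ρ (conjAct ((Quotient.out q : ↥H) : G) θ)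
        (χ (conjAct ((Quotient.out q : ↥H) : G) θ))))
    (h : ↥H) {k t : G} (hk : k ∈ K) (ht : t ∈ H) (hθt : θ t = t)
    (heq : (h : G) = k * ((Quotient.out (Quotient.mk (dcSetoid K H θ) h) : ↥H) : G) * t) :
    lam K H ρ θ χ μ h
      = (χ θ t)⁻¹ • ((μ (Quotient.mk (dcSetoid K H θ) h) : V →ₗ[ℂ] ℂ).comp
          (ρ ⟨k⁻¹, inv_mem hk⟩)) := by
  apply LinearMap.ext; intro v
  have hwd := wd K H hKH ρ θ χ hchar hcompat (Quotient.out (Quotient.mk (dcSetoid K H θ) h))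
    (μ (Quotient.mk (dcSetoid K H θ) h) : V →ₗ[ℂ] ℂ) (μ (Quotient.mk (dcSetoid K H θ) h)).2
    (dK_mem K H θ h) hk (dT_mem K H θ h) ht (dT_fix K H θ h) hθt
    ((d_eq K H θ h).symm.trans heq) v
  simp only [lam, LinearMap.smul_apply, LinearMap.coe_comp, Function.comp_apply, smul_eq_mul]
  exact hwd

include hKH hchar hcompat in
lemma lam_rel
    (μ : ∀ q : QT K H θ, ↥(HomK K H ρ (conjAct ((Quotient.out q : ↥H) : G) θ)
        (χ (conjAct ((Quotient.out q : ↥H) : G) θ))))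
    (h : ↥H) {k t : G} (hk : k ∈ K) (ht : t ∈ H) (hθt : θ t = t) :
    lam K H ρ θ χ μ ⟨k * (h : G) * t, mul_mem (mul_mem (hKH hk) h.2) ht⟩
      = (χ θ t)⁻¹ • ((lam K H ρ θ χ μ h).comp (ρ ⟨k⁻¹, inv_mem hk⟩)) := by
  set h' : ↥H := ⟨k * (h : G) * t, mul_mem (mul_mem (hKH hk) h.2) ht⟩ with hh'
  have hq : Quotient.mk (dcSetoid K H θ) h' = Quotient.mk (dcSetoid K H θ) h :=
    Quotient.sound (dcRel_symm K H ⟨k, hk, t, ht, hθt, rfl⟩)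
  have heq' : (h' : G) = (k * dK K H θ h)
      * ((Quotient.out (Quotient.mk (dcSetoid K H θ) h') : ↥H) : G) * (dT K H θ h * t) := by
    rw [hq]
    show k * (h : G) * t = _
    rw [d_eq K H θ h]
    group
  rw [lam_eq K H hKH ρ θ χ hchar hcompat μ h' (mul_mem hk (dK_mem K H θ h))
    (mul_mem (dT_mem K H θ h) ht) (by rw [map_mul, hθt, dT_fix]) heq', hq]
  simp only [lam]
  apply LinearMap.ext; intro v
  simp only [LinearMap.smul_apply, LinearMap.coe_comp, Function.comp_apply, smul_eq_mul]
  have hsplit : (⟨(k * dK K H θ h)⁻¹, inv_mem (mul_mem hk (dK_mem K H θ h))⟩ : ↥K)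
      = ⟨(dK K H θ h)⁻¹, inv_mem (dK_mem K H θ h)⟩ * ⟨k⁻¹, inv_mem hk⟩ :=
    Subtype.ext (by push_cast; group)
  rw [hsplit, map_mul, Module.End.mul_apply]
  rw [(hchar θ (theta_mem_orb H θ) (dT K H θ h) t (dT_mem K H θ h) (dT_fix K H θ h) ht hθt).1]
  rw [mul_inv]
  ring

include hKH hchar hcompat in
lemma lam_out
    (μ : ∀ q : QT K H θ, ↥(HomK K H ρ (conjAct ((Quotient.out q : ↥H) : G) θ)
        (χ (conjAct ((Quotient.out q : ↥H) : G) θ))))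
    (q : QT K H θ) :
    lam K H ρ θ χ μ (Quotient.out q) = (μ q : V →ₗ[ℂ] ℂ) := by
  have hq : Quotient.mk (dcSetoid K H θ) (Quotient.out q) = q := Quotient.out_eq q
  have heq : ((Quotient.out q : ↥H) : G)
      = 1 * ((Quotient.out (Quotient.mk (dcSetoid K H θ) (Quotient.out q)) : ↥H) : G) * 1 := by
    rw [hq]; group
  rw [lam_eq K H hKH ρ θ χ hchar hcompat μ _ (one_mem K) (one_mem H) (map_one θ) heq, hq]
  have h1 : (⟨(1 : G)⁻¹, inv_mem (one_mem K)⟩ : ↥K) = 1 := Subtype.ext (by push_cast; group)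
  rw [h1, map_one, chi_one hchar (theta_mem_orb H θ), inv_one, one_smul,
    Module.End.one_eq_id, LinearMap.comp_id]

include hKH hcompat in
lemma Phi_mem (l : ↥(HomInd K H hKH ρ θ (χ θ))) (s : ↥H) :
    (l : ↥(IndSpace K H hKH ρ) →ₗ[ℂ] ℂ).comp (eltFL K H hKH ρ s)
      ∈ HomK K H ρ (conjAct (s : G) θ) (χ (conjAct (s : G) θ)) := by
  intro k hkH hfix v
  show (l : ↥(IndSpace K H hKH ρ) →ₗ[ℂ] ℂ) (eltF K H hKH ρ s (ρ k v))
      = χ (conjAct (s : G) θ) (k : G)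
        * (l : ↥(IndSpace K H hKH ρ) →ₗ[ℂ] ℂ) (eltF K H hKH ρ s v)
  rw [eltF_fix K H hKH ρ s k v]
  have hfix' : θ ((s : G)⁻¹ * (k : G) * (s : G)) = (s : G)⁻¹ * (k : G) * (s : G) := by
    have h0 : conjAct (s : G) θ (k : G) = (k : G) := hfix
    rw [conjAct_apply] at h0
    have h1 : θ ((s : G)⁻¹ * (k : G) * (s : G))
        = (s : G)⁻¹ * ((s : G) * θ ((s : G)⁻¹ * (k : G) * (s : G)) * (s : G)⁻¹) * (s : G) := by
      group
    rw [h1, h0]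
  have h2 := l.2 ((s : G)⁻¹ * (k : G) * (s : G))
      (mul_mem (mul_mem (inv_mem s.2) (hKH k.2)) s.2) hfix' (eltF K H hKH ρ s v)
  rw [h2]
  have h3 := hcompat θ (theta_mem_orb H θ) (s : G) s.2 ((s : G)⁻¹ * (k : G) * (s : G))
      (mul_mem (mul_mem (inv_mem s.2) (hKH k.2)) s.2) hfix'
  have h4 : (s : G) * ((s : G)⁻¹ * (k : G) * (s : G)) * (s : G)⁻¹ = (k : G) := by group
  rw [h4] at h3
  rw [h3]

/-- The averaged inverse of the restriction map. -/
noncomputable def Psi [Fintype G]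
    (μ : ∀ q : QT K H θ, ↥(HomK K H ρ (conjAct ((Quotient.out q : ↥H) : G) θ)
        (χ (conjAct ((Quotient.out q : ↥H) : G) θ)))) :
    ↥(IndSpace K H hKH ρ) →ₗ[ℂ] ℂ where
  toFun f := (Fintype.card ↥K : ℂ)⁻¹
    * ∑ h : ↥H, lam K H ρ θ χ μ h ((f : ↥H → V) h)
  map_add' f g := by
    simp only [Submodule.coe_add, Pi.add_apply, map_add]
    rw [Finset.sum_add_distrib, mul_add]
  map_smul' c f := by
    simp only [SetLike.val_smul, Pi.smul_apply, map_smul, smul_eq_mul, RingHom.id_apply]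
    rw [← Finset.mul_sum]
    ring

lemma Psi_apply [Fintype G]
    (μ : ∀ q : QT K H θ, ↥(HomK K H ρ (conjAct ((Quotient.out q : ↥H) : G) θ)
        (χ (conjAct ((Quotient.out q : ↥H) : G) θ))))
    (f : ↥(IndSpace K H hKH ρ)) :
    Psi K H hKH ρ θ χ μ f
      = (Fintype.card ↥K : ℂ)⁻¹ * ∑ h : ↥H, lam K H ρ θ χ μ h ((f : ↥H → V) h) := rfl

include hKH hchar hcompat in
lemma Psi_mem [Fintype G]
    (μ : ∀ q : QT K H θ, ↥(HomK K H ρ (conjAct ((Quotient.out q : ↥H) : G) θ)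
        (χ (conjAct ((Quotient.out q : ↥H) : G) θ)))) :
    Psi K H hKH ρ θ χ μ ∈ HomInd K H hKH ρ θ (χ θ) := by
  intro s hs hfix f
  show (Fintype.card ↥K : ℂ)⁻¹
      * ∑ h : ↥H, lam K H ρ θ χ μ h ((f : ↥H → V) (h * ⟨s, hs⟩))
      = χ θ s * ((Fintype.card ↥K : ℂ)⁻¹
      * ∑ h : ↥H, lam K H ρ θ χ μ h ((f : ↥H → V) h))
  have hterm : ∀ h : ↥H, lam K H ρ θ χ μ (h * (⟨s, hs⟩ : ↥H)⁻¹)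
      = χ θ s • lam K H ρ θ χ μ h := by
    intro h
    have hmk : (h * (⟨s, hs⟩ : ↥H)⁻¹ : ↥H)
        = ⟨(1 : G) * (h : G) * s⁻¹, mul_mem (mul_mem (hKH (one_mem K)) h.2) (inv_mem hs)⟩ :=
      Subtype.ext (by push_cast; group)
    rw [hmk, lam_rel K H hKH ρ θ χ hchar hcompat μ h (one_mem K) (inv_mem hs)
        (by rw [map_inv, hfix])]
    have h1 : (⟨(1 : G)⁻¹, inv_mem (one_mem K)⟩ : ↥K) = 1 := Subtype.ext (by push_cast; group)
    rw [h1, map_one, Module.End.one_eq_id, LinearMap.comp_id,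
      chi_inv hchar (theta_mem_orb H θ) hs hfix, inv_inv]
  have hre : ∑ h : ↥H, lam K H ρ θ χ μ h ((f : ↥H → V) (h * ⟨s, hs⟩))
      = ∑ h : ↥H, lam K H ρ θ χ μ (h * (⟨s, hs⟩ : ↥H)⁻¹) ((f : ↥H → V) h) := by
    apply Fintype.sum_equiv (Equiv.mulRight (⟨s, hs⟩ : ↥H))
    intro x
    simp only [Equiv.coe_mulRight]
    rw [mul_inv_cancel_right]
  rw [hre]
  simp only [hterm, LinearMap.smul_apply, smul_eq_mul]
  rw [← Finset.mul_sum]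
  ring

lemma lam_add
    (μ ν : ∀ q : QT K H θ, ↥(HomK K H ρ (conjAct ((Quotient.out q : ↥H) : G) θ)
        (χ (conjAct ((Quotient.out q : ↥H) : G) θ)))) (h : ↥H) :
    lam K H ρ θ χ (μ + ν) h = lam K H ρ θ χ μ h + lam K H ρ θ χ ν h := by
  simp only [lam, Pi.add_apply, Submodule.coe_add, LinearMap.add_comp, smul_add]

lemma lam_smul (c : ℂ)
    (μ : ∀ q : QT K H θ, ↥(HomK K H ρ (conjAct ((Quotient.out q : ↥H) : G) θ)
        (χ (conjAct ((Quotient.out q : ↥H) : G) θ)))) (h : ↥H) :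
    lam K H ρ θ χ (c • μ) h = c • lam K H ρ θ χ μ h := by
  simp only [lam, Pi.smul_apply, SetLike.val_smul, LinearMap.smul_comp]
  rw [smul_comm]

lemma eltFL_apply (s : ↥H) (v : V) : eltFL K H hKH ρ s v = eltF K H hKH ρ s v := rfl

lemma sum_eltF [Fintype G] (f : ↥(IndSpace K H hKH ρ)) :
    ∑ h : ↥H, eltF K H hKH ρ h ((f : ↥H → V) h) = (Fintype.card ↥K : ℂ) • f := by
  apply Subtype.ext
  rw [Submodule.coe_sum]
  funext x
  rw [Finset.sum_apply]
  have key : ∀ h : ↥H,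
      ((eltF K H hKH ρ h ((f : ↥H → V) h) : ↥(IndSpace K H hKH ρ)) : ↥H → V) x
      = if hc : (x : G) * (h : G)⁻¹ ∈ K
          then ρ ⟨(x : G) * (h : G)⁻¹, hc⟩ ((f : ↥H → V) h) else 0 := fun h => rfl
  simp only [key]
  have hbij := Finset.sum_of_injOn
    (s := (Finset.univ : Finset ↥K)) (t := (Finset.univ : Finset ↥H))
    (f := fun _ : ↥K => ((f : ↥H → V) x))
    (g := fun h : ↥H => if hc : (x : G) * (h : G)⁻¹ ∈ K
        then ρ ⟨(x : G) * (h : G)⁻¹, hc⟩ ((f : ↥H → V) h) else 0)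
    (fun k : ↥K => (⟨(k : G)⁻¹ * (x : G), mul_mem (inv_mem (hKH k.2)) x.2⟩ : ↥H))
    (by
      intro k _ k' _ hkk'
      have h1 : (k : G)⁻¹ * (x : G) = (k' : G)⁻¹ * (x : G) := congrArg Subtype.val hkk'
      exact Subtype.ext (inv_injective (mul_right_cancel h1)))
    (by intro k _; exact Finset.mem_coe.mpr (Finset.mem_univ _))
    (by
      intro h _ hnot
      show (if hc : (x : G) * (h : G)⁻¹ ∈ K
          then ρ ⟨(x : G) * (h : G)⁻¹, hc⟩ ((f : ↥H → V) h) else 0) = 0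
      rw [dif_neg]
      intro hc
      apply hnot
      refine ⟨⟨(x : G) * (h : G)⁻¹, hc⟩, Finset.mem_coe.mpr (Finset.mem_univ _), ?_⟩
      apply Subtype.ext
      show ((x : G) * (h : G)⁻¹)⁻¹ * (x : G) = (h : G)
      group)
    (by
      intro k _
      show (f : ↥H → V) x
          = if hc : (x : G) * ((k : G)⁻¹ * (x : G))⁻¹ ∈ K
              then ρ ⟨(x : G) * ((k : G)⁻¹ * (x : G))⁻¹, hc⟩
                ((f : ↥H → V) ⟨(k : G)⁻¹ * (x : G), mul_mem (inv_mem (hKH k.2)) x.2⟩) else 0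
      have he : (x : G) * ((k : G)⁻¹ * (x : G))⁻¹ = (k : G) := by group
      rw [he, dif_pos k.2]
      have h2 := f.2 ⟨(k : G), k.2⟩ ⟨(k : G)⁻¹ * (x : G), mul_mem (inv_mem (hKH k.2)) x.2⟩
      have e2 : (⟨(k : G), k.2⟩ : ↥K) = k := rfl
      rw [e2] at h2
      rw [← h2]
      exact congrArg (f : ↥H → V) (Subtype.ext
        (by show (x : G) = (k : G) * ((k : G)⁻¹ * (x : G)); group)))
  rw [← hbij, Finset.sum_const, Finset.card_univ, ← Nat.cast_smul_eq_nsmul ℂ]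
  show _ = ((Fintype.card ↥K : ℂ) • (f : ↥H → V)) x
  rw [Pi.smul_apply]

include hKH hchar hcompat in
lemma Psi_eltF [Fintype G]
    (μ : ∀ q : QT K H θ, ↥(HomK K H ρ (conjAct ((Quotient.out q : ↥H) : G) θ)
        (χ (conjAct ((Quotient.out q : ↥H) : G) θ))))
    (q : QT K H θ) (v : V) :
    Psi K H hKH ρ θ χ μ (eltF K H hKH ρ (Quotient.out q) v) = (μ q : V →ₗ[ℂ] ℂ) v := by
  rw [Psi_apply]
  have hsum : ∑ h : ↥H, lam K H ρ θ χ μ h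
      (((eltF K H hKH ρ (Quotient.out q) v) : ↥H → V) h)
      = ∑ _k : ↥K, (μ q : V →ₗ[ℂ] ℂ) v := by
    symm
    apply Finset.sum_of_injOn
      (fun k : ↥K => (⟨(k : G) * ((Quotient.out q : ↥H) : G),
        mul_mem (hKH k.2) (Quotient.out q).2⟩ : ↥H))
    · intro k _ k' _ hkk'
      have h1 : (k : G) * ((Quotient.out q : ↥H) : G)
          = (k' : G) * ((Quotient.out q : ↥H) : G) := congrArg Subtype.val hkk'
      exact Subtype.ext (mul_right_cancel h1)
    · intro k _; exact Finset.mem_coe.mpr (Finset.mem_univ _)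
    · intro h _ hnot
      show lam K H ρ θ χ μ h
          (if hc : (h : G) * ((Quotient.out q : ↥H) : G)⁻¹ ∈ K
            then ρ ⟨(h : G) * ((Quotient.out q : ↥H) : G)⁻¹, hc⟩ v else 0) = 0
      rw [dif_neg, map_zero]
      intro hc
      apply hnot
      refine ⟨⟨(h : G) * ((Quotient.out q : ↥H) : G)⁻¹, hc⟩,
        Finset.mem_coe.mpr (Finset.mem_univ _), ?_⟩
      apply Subtype.ext
      show ((h : G) * ((Quotient.out q : ↥H) : G)⁻¹) * ((Quotient.out q : ↥H) : G) = (h : G)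
      group
    · intro k _
      show (μ q : V →ₗ[ℂ] ℂ) v
          = lam K H ρ θ χ μ ⟨(k : G) * ((Quotient.out q : ↥H) : G),
              mul_mem (hKH k.2) (Quotient.out q).2⟩
            (if hc : ((k : G) * ((Quotient.out q : ↥H) : G)) * ((Quotient.out q : ↥H) : G)⁻¹ ∈ K
              then ρ ⟨((k : G) * ((Quotient.out q : ↥H) : G)) * ((Quotient.out q : ↥H) : G)⁻¹, hc⟩
                v else 0)
      have he : ((k : G) * ((Quotient.out q : ↥H) : G)) * ((Quotient.out q : ↥H) : G)⁻¹
          = (k : G) := by group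
      rw [he, dif_pos k.2]
      have hmk : (⟨(k : G) * ((Quotient.out q : ↥H) : G),
            mul_mem (hKH k.2) (Quotient.out q).2⟩ : ↥H)
          = ⟨(k : G) * ((Quotient.out q : ↥H) : G) * 1,
              mul_mem (mul_mem (hKH k.2) (Quotient.out q).2) (one_mem H)⟩ :=
        Subtype.ext (by group)
      rw [hmk, lam_rel K H hKH ρ θ χ hchar hcompat μ (Quotient.out q) k.2 (one_mem H)
        (map_one θ)]
      rw [lam_out K H hKH ρ θ χ hchar hcompat μ q]
      rw [chi_one hchar (theta_mem_orb H θ), inv_one, one_smul]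
      simp only [LinearMap.coe_comp, Function.comp_apply]
      rw [← Module.End.mul_apply, ← map_mul]
      have hone : (⟨(k : G)⁻¹, inv_mem k.2⟩ : ↥K) * ⟨(k : G), k.2⟩ = 1 :=
        Subtype.ext (by push_cast; group)
      have e2 : (⟨(k : G), k.2⟩ : ↥K) = k := rfl
      rw [← e2, hone, map_one, Module.End.one_apply]
  rw [hsum, Finset.sum_const, Finset.card_univ, nsmul_eq_mul, ← mul_assoc,
    inv_mul_cancel₀ (Nat.cast_ne_zero.mpr Fintype.card_ne_zero), one_mul]

include hKH hchar in
lemma l_eltF (l : ↥(HomInd K H hKH ρ θ (χ θ))) (s : ↥H) {k t : G}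
    (hk : k ∈ K) (ht : t ∈ H) (hθt : θ t = t) (v : V) :
    (l : ↥(IndSpace K H hKH ρ) →ₗ[ℂ] ℂ)
        (eltF K H hKH ρ ⟨k * (s : G) * t, mul_mem (mul_mem (hKH hk) s.2) ht⟩ v)
      = (χ θ t)⁻¹ * (l : ↥(IndSpace K H hKH ρ) →ₗ[ℂ] ℂ)
          (eltF K H hKH ρ s (ρ ⟨k⁻¹, inv_mem hk⟩ v)) := by
  have e1 : (⟨k * (s : G) * t, mul_mem (mul_mem (hKH hk) s.2) ht⟩ : ↥H)
      = ⟨((⟨k * (s : G), mul_mem (hKH hk) s.2⟩ : ↥H) : G) * t,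
          mul_mem (⟨k * (s : G), mul_mem (hKH hk) s.2⟩ : ↥H).2 ht⟩ := rfl
  rw [e1, eltF_right K H hKH ρ ⟨k * (s : G), mul_mem (hKH hk) s.2⟩ t ht v]
  rw [l.2 t⁻¹ (inv_mem ht) (by rw [map_inv, hθt]) _]
  have e2 : (⟨k * (s : G), mul_mem (hKH hk) s.2⟩ : ↥H)
      = ⟨((⟨k, hk⟩ : ↥K) : G) * (s : G), mul_mem (hKH (⟨k, hk⟩ : ↥K).2) s.2⟩ := rfl
  rw [e2, eltF_left K H hKH ρ ⟨k, hk⟩ s v]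
  rw [chi_inv hchar (theta_mem_orb H θ) ht hθt]
  have e3 : (⟨k, hk⟩ : ↥K)⁻¹ = (⟨k⁻¹, inv_mem hk⟩ : ↥K) := rfl
  rw [e3]

include hKH hchar hcompat in
lemma lam_Phi (l : ↥(HomInd K H hKH ρ θ (χ θ)))
    (μ : ∀ q : QT K H θ, ↥(HomK K H ρ (conjAct ((Quotient.out q : ↥H) : G) θ)
        (χ (conjAct ((Quotient.out q : ↥H) : G) θ))))
    (hμ : ∀ q, (μ q : V →ₗ[ℂ] ℂ)
      = (l : ↥(IndSpace K H hKH ρ) →ₗ[ℂ] ℂ).comp (eltFL K H hKH ρ (Quotient.out q)))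
    (h : ↥H) (v : V) :
    lam K H ρ θ χ μ h v
      = (l : ↥(IndSpace K H hKH ρ) →ₗ[ℂ] ℂ) (eltF K H hKH ρ h v) := by
  simp only [lam, LinearMap.smul_apply, LinearMap.coe_comp, Function.comp_apply, smul_eq_mul]
  rw [hμ (Quotient.mk (dcSetoid K H θ) h)]
  simp only [LinearMap.coe_comp, Function.comp_apply, eltFL_apply]
  have e0 : eltF K H hKH ρ h v
      = eltF K H hKH ρ
          ⟨dK K H θ h * ((Quotient.out (Quotient.mk (dcSetoid K H θ) h) : ↥H) : G) * dT K H θ h,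
            mul_mem (mul_mem (hKH (dK_mem K H θ h))
              (Quotient.out (Quotient.mk (dcSetoid K H θ) h)).2) (dT_mem K H θ h)⟩ v := by
    congr 1
    exact Subtype.ext (d_eq K H θ h)
  rw [e0, l_eltF K H hKH ρ θ χ hchar l (Quotient.out (Quotient.mk (dcSetoid K H θ) h))
    (dK_mem K H θ h) (dT_mem K H θ h) (dT_fix K H θ h) v]

/-- The restriction map `Hom(Ind ρ, χ_θ) → Π_q Hom_K(ρ, χ_{q·θ})`. -/
noncomputable def Phi :
    ↥(HomInd K H hKH ρ θ (χ θ)) →ₗ[ℂ]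
      (∀ q : QT K H θ, ↥(HomK K H ρ (conjAct ((Quotient.out q : ↥H) : G) θ)
        (χ (conjAct ((Quotient.out q : ↥H) : G) θ)))) where
  toFun l q := ⟨(l : ↥(IndSpace K H hKH ρ) →ₗ[ℂ] ℂ).comp (eltFL K H hKH ρ (Quotient.out q)),
    Phi_mem K H hKH ρ θ χ hcompat l (Quotient.out q)⟩
  map_add' l l' := by
    funext q
    apply Subtype.ext
    simp only [Submodule.coe_add, LinearMap.add_comp, Pi.add_apply]
  map_smul' c l := by
    funext q
    apply Subtype.ext
    simp only [SetLike.val_smul, LinearMap.smul_comp, Pi.smul_apply, RingHom.id_apply]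

noncomputable def PsiL [Fintype G] :
    (∀ q : QT K H θ, ↥(HomK K H ρ (conjAct ((Quotient.out q : ↥H) : G) θ)
        (χ (conjAct ((Quotient.out q : ↥H) : G) θ))))
      →ₗ[ℂ] ↥(HomInd K H hKH ρ θ (χ θ)) where
  toFun μ := ⟨Psi K H hKH ρ θ χ μ, Psi_mem K H hKH ρ θ χ hchar hcompat μ⟩
  map_add' μ ν := by
    apply Subtype.ext
    apply LinearMap.ext; intro f
    show Psi K H hKH ρ θ χ (μ + ν) f = Psi K H hKH ρ θ χ μ f + Psi K H hKH ρ θ χ ν f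
    simp only [Psi_apply, lam_add, LinearMap.add_apply]
    rw [Finset.sum_add_distrib, mul_add]
  map_smul' c μ := by
    apply Subtype.ext
    apply LinearMap.ext; intro f
    show Psi K H hKH ρ θ χ (c • μ) f = c * Psi K H hKH ρ θ χ μ f
    simp only [Psi_apply, lam_smul, LinearMap.smul_apply, smul_eq_mul]
    rw [← Finset.mul_sum]
    ring

/-- The Mackey decomposition of `Hom(Ind ρ, χ_θ)` as a linear equivalence. -/
noncomputable def MackeyEquiv [Fintype G] :
    ↥(HomInd K H hKH ρ θ (χ θ)) ≃ₗ[ℂ]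
      (∀ q : QT K H θ, ↥(HomK K H ρ (conjAct ((Quotient.out q : ↥H) : G) θ)
        (χ (conjAct ((Quotient.out q : ↥H) : G) θ)))) :=
  LinearEquiv.ofLinear (Phi K H hKH ρ θ χ hcompat) (PsiL K H hKH ρ θ χ hchar hcompat)
    (by
      apply LinearMap.ext; intro μ
      funext q
      apply Subtype.ext
      apply LinearMap.ext; intro v
      show Psi K H hKH ρ θ χ μ (eltF K H hKH ρ (Quotient.out q) v) = (μ q : V →ₗ[ℂ] ℂ) v
      exact Psi_eltF K H hKH ρ θ χ hchar hcompat μ q v)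
    (by
      apply LinearMap.ext; intro l
      apply Subtype.ext
      apply LinearMap.ext; intro f
      show Psi K H hKH ρ θ χ ((Phi K H hKH ρ θ χ hcompat) l) f
          = (l : ↥(IndSpace K H hKH ρ) →ₗ[ℂ] ℂ) f
      rw [Psi_apply]
      have hl : ∀ h : ↥H,
          lam K H ρ θ χ ((Phi K H hKH ρ θ χ hcompat) l) h ((f : ↥H → V) h)
          = (l : ↥(IndSpace K H hKH ρ) →ₗ[ℂ] ℂ) (eltF K H hKH ρ h ((f : ↥H → V) h)) := by
        intro h
        exact lam_Phi K H hKH ρ θ χ hchar hcompat l _ (fun q => rfl) h ((f : ↥H → V) h)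
      simp only [hl]
      rw [← map_sum, sum_eltF K H hKH ρ f, map_smul, smul_eq_mul, ← mul_assoc,
        inv_mul_cancel₀ (Nat.cast_ne_zero.mpr Fintype.card_ne_zero), one_mul])

include hKH hchar hcompat in
lemma finrank_homInd [Fintype G] [FiniteDimensional ℂ V] :
    Module.finrank ℂ ↥(HomInd K H hKH ρ θ (χ θ))
      = ∑ q : QT K H θ, Module.finrank ℂ
          ↥(HomK K H ρ (conjAct ((Quotient.out q : ↥H) : G) θ)
            (χ (conjAct ((Quotient.out q : ↥H) : G) θ))) := by
  rw [LinearEquiv.finrank_eq (MackeyEquiv K H hKH ρ θ χ hchar hcompat),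
    Module.finrank_pi_fintype]

end AuxC

section AuxE

attribute [local instance] Classical.propDecidable

variable (K H : Subgroup G) (hKH : K ≤ H)

lemma conjOut (θ : MulAut G) (h : ↥H) :
    ∃ k ∈ K, conjAct ((Quotient.out (Quotient.mk (dcSetoid K H θ) h) : ↥H) : G) θ
      = conjAct k (conjAct (h : G) θ) := by
  obtain ⟨p, hk, ht, hθt, heq⟩ := exists_decomp K H θ h
  refine ⟨p.1⁻¹, inv_mem hk, ?_⟩
  have hout : ((Quotient.out (Quotient.mk (dcSetoid K H θ) h) : ↥H) : G)
      = p.1⁻¹ * (h : G) * p.2⁻¹ := by rw [heq]; group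
  have hstab : conjAct p.2⁻¹ θ = θ :=
    mem_stabSub.mp (inv_mem (fixedSub_le_stabSub θ (mem_fixedSub.mpr hθt)))
  rw [hout, conjAct_mul, conjAct_mul, hstab]

include hKH in
lemma J_decomp (ψ : MulAut G) {j : G} (hj : j ∈ (K ⊓ stabSub ψ) ⊔ (H ⊓ fixedSub ψ)) :
    ∃ κ ∈ K ⊓ stabSub ψ, ∃ u ∈ H ⊓ fixedSub ψ, j = κ * u := by
  let P : Subgroup G :=
    { carrier := {x | ∃ κ ∈ K ⊓ stabSub ψ, ∃ u ∈ H ⊓ fixedSub ψ, x = κ * u}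
      one_mem' := ⟨1, one_mem _, 1, one_mem _, by group⟩
      mul_mem' := by
        rintro a b ⟨κ, hκ, u, hu, rfl⟩ ⟨κ', hκ', u', hu', rfl⟩
        obtain ⟨hκ'K, hκ's⟩ := Subgroup.mem_inf.mp hκ'
        obtain ⟨huH, huf⟩ := Subgroup.mem_inf.mp hu
        refine ⟨κ * κ', mul_mem hκ hκ', (κ'⁻¹ * u * κ') * u',
          mul_mem (Subgroup.mem_inf.mpr ⟨?_, ?_⟩) hu', by group⟩
        · exact mul_mem (mul_mem (inv_mem (hKH hκ'K)) huH) (hKH hκ'K)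
        · have h5 := stab_conj_fixed (inv_mem hκ's) huf
          rw [inv_inv] at h5
          exact h5
      inv_mem' := by
        rintro a ⟨κ, hκ, u, hu, rfl⟩
        obtain ⟨hκK, hκs⟩ := Subgroup.mem_inf.mp hκ
        obtain ⟨huH, huf⟩ := Subgroup.mem_inf.mp hu
        refine ⟨κ⁻¹, inv_mem hκ, κ * u⁻¹ * κ⁻¹, Subgroup.mem_inf.mpr ⟨?_, ?_⟩, by group⟩
        · exact mul_mem (mul_mem (hKH hκK) (inv_mem huH)) (inv_mem (hKH hκK))
        · exact stab_conj_fixed hκs (inv_mem huf) }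
  have hJP : (K ⊓ stabSub ψ) ⊔ (H ⊓ fixedSub ψ) ≤ P :=
    sup_le (fun x hx => ⟨x, hx, 1, one_mem _, by group⟩)
      (fun x hx => ⟨1, one_mem _, x, hx, by group⟩)
  exact hJP hj

include hKH in
lemma card_fiber (θ ψ : MulAut G) {h₀ : G} (h₀H : h₀ ∈ H) (hψ : ψ = conjAct h₀ θ) :
    Nat.card {q : QT K H θ //
        ∃ k ∈ K, ψ = conjAct k (conjAct ((Quotient.out q : ↥H) : G) θ)}
      = m ψ K H := by
  set W : Subgroup G := H ⊓ stabSub ψ with hW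
  set J : Subgroup G := (K ⊓ stabSub ψ) ⊔ (H ⊓ fixedSub ψ) with hJ
  have hWH : ∀ w : ↥W, (w : G) ∈ H := fun w => (Subgroup.mem_inf.mp w.2).1
  have hWs : ∀ w : ↥W, (w : G) ∈ stabSub ψ := fun w => (Subgroup.mem_inf.mp w.2).2
  have hle1 : K ⊓ stabSub ψ ≤ J := le_sup_left
  have hle2 : H ⊓ fixedSub ψ ≤ J := le_sup_right
  let E : ↥W → {q : QT K H θ //
      ∃ k ∈ K, ψ = conjAct k (conjAct ((Quotient.out q : ↥H) : G) θ)} := fun w =>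
    ⟨Quotient.mk (dcSetoid K H θ) ⟨(w : G)⁻¹ * h₀, mul_mem (inv_mem (hWH w)) h₀H⟩, by
      obtain ⟨k₁, hk₁, hco⟩ :=
        conjOut K H θ ⟨(w : G)⁻¹ * h₀, mul_mem (inv_mem (hWH w)) h₀H⟩
      have hc2 : conjAct ((w : G)⁻¹ * h₀) θ = ψ := by
        rw [conjAct_mul, ← hψ]
        exact mem_stabSub.mp (inv_mem (hWs w))
      refine ⟨k₁⁻¹, inv_mem hk₁, ?_⟩
      rw [hco, hc2, ← conjAct_mul, inv_mul_cancel, conjAct_one]⟩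
  have hresp : ∀ a b : ↥W, QuotientGroup.leftRel (J.subgroupOf W) a b → E a = E b := by
    intro w w' hr
    rw [QuotientGroup.leftRel_apply] at hr
    have hj' : (w : G)⁻¹ * (w' : G) ∈ J := hr
    obtain ⟨κ, hκ, u, hu, hju⟩ := J_decomp K H hKH ψ hj'
    obtain ⟨hκK, hκs⟩ := Subgroup.mem_inf.mp hκ
    obtain ⟨huH, huf⟩ := Subgroup.mem_inf.mp hu
    have hw' : (w' : G) = (w : G) * (κ * u) := by rw [← hju]; group
    have haH : κ * u⁻¹ * κ⁻¹ ∈ H :=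
      mul_mem (mul_mem (hKH hκK) (inv_mem huH)) (inv_mem (hKH hκK))
    have ha_fix : κ * u⁻¹ * κ⁻¹ ∈ fixedSub ψ := stab_conj_fixed hκs (inv_mem huf)
    have hbH : (w : G) * (κ * u⁻¹ * κ⁻¹) * (w : G)⁻¹ ∈ H :=
      mul_mem (mul_mem (hWH w) haH) (inv_mem (hWH w))
    have hb_fix : (w : G) * (κ * u⁻¹ * κ⁻¹) * (w : G)⁻¹ ∈ fixedSub ψ :=
      stab_conj_fixed (hWs w) ha_fix
    have ht_mem : h₀⁻¹ * ((w : G) * (κ * u⁻¹ * κ⁻¹) * (w : G)⁻¹) * h₀ ∈ H :=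
      mul_mem (mul_mem (inv_mem h₀H) hbH) h₀H
    have ht_fix : θ (h₀⁻¹ * ((w : G) * (κ * u⁻¹ * κ⁻¹) * (w : G)⁻¹) * h₀)
        = h₀⁻¹ * ((w : G) * (κ * u⁻¹ * κ⁻¹) * (w : G)⁻¹) * h₀ := by
      have h5 := conj_mem_fixed hb_fix h₀⁻¹
      rw [hψ, conjAct_inv_cancel, inv_inv] at h5
      exact mem_fixedSub.mp h5
    apply Subtype.ext
    apply Quotient.sound
    refine ⟨κ⁻¹, inv_mem hκK,
      h₀⁻¹ * ((w : G) * (κ * u⁻¹ * κ⁻¹) * (w : G)⁻¹) * h₀, ht_mem, ht_fix, ?_⟩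
    show (w' : G)⁻¹ * h₀ = κ⁻¹ * ((w : G)⁻¹ * h₀)
        * (h₀⁻¹ * ((w : G) * (κ * u⁻¹ * κ⁻¹) * (w : G)⁻¹) * h₀)
    rw [hw']; group
  have hinj : ∀ w w' : ↥W, E w = E w' → QuotientGroup.leftRel (J.subgroupOf W) w w' := by
    intro w w' hE
    have hq : Quotient.mk (dcSetoid K H θ) ⟨(w : G)⁻¹ * h₀, mul_mem (inv_mem (hWH w)) h₀H⟩
        = Quotient.mk (dcSetoid K H θ) ⟨(w' : G)⁻¹ * h₀, mul_mem (inv_mem (hWH w')) h₀H⟩ :=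
      congrArg Subtype.val hE
    obtain ⟨k, hk, t, htH, hθt, heq⟩ := Quotient.exact hq
    have heq' : (w' : G)⁻¹ * h₀ = k * ((w : G)⁻¹ * h₀) * t := heq
    have hs₂H : h₀ * t⁻¹ * h₀⁻¹ ∈ H := mul_mem (mul_mem h₀H (inv_mem htH)) (inv_mem h₀H)
    have hs₂fix : h₀ * t⁻¹ * h₀⁻¹ ∈ fixedSub ψ := by
      have h6 := conj_mem_fixed (mem_fixedSub.mpr (by rw [map_inv, hθt] :
        θ t⁻¹ = t⁻¹)) h₀
      rw [← hψ] at h6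
      exact h6
    have hxH : (w : G)⁻¹ * (h₀ * t⁻¹ * h₀⁻¹) * (w : G) ∈ H :=
      mul_mem (mul_mem (inv_mem (hWH w)) hs₂H) (hWH w)
    have hx_fix : (w : G)⁻¹ * (h₀ * t⁻¹ * h₀⁻¹) * (w : G) ∈ fixedSub ψ := by
      have h5 := stab_conj_fixed (inv_mem (hWs w)) hs₂fix
      rw [inv_inv] at h5
      exact h5
    have h8 : (w' : G)⁻¹ = k * ((w : G)⁻¹ * h₀) * t * h₀⁻¹ := by rw [← heq']; group
    have h7 : (w : G)⁻¹ * (w' : G)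
        = ((w : G)⁻¹ * (h₀ * t⁻¹ * h₀⁻¹) * (w : G)) * k⁻¹ := by
      have h9 : (w' : G) = (k * ((w : G)⁻¹ * h₀) * t * h₀⁻¹)⁻¹ := by rw [← h8, inv_inv]
      rw [h9]; group
    have hkstab : k⁻¹ ∈ stabSub ψ := by
      have h10 : k⁻¹ = ((w : G)⁻¹ * (h₀ * t⁻¹ * h₀⁻¹) * (w : G))⁻¹
          * ((w : G)⁻¹ * (w' : G)) := by rw [h7]; group
      rw [h10]
      exact mul_mem (inv_mem (fixedSub_le_stabSub ψ hx_fix))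
        (mul_mem (inv_mem (hWs w)) (hWs w'))
    rw [QuotientGroup.leftRel_apply]
    show ((w⁻¹ * w' : ↥W) : G) ∈ J
    have hcoe : ((w⁻¹ * w' : ↥W) : G) = (w : G)⁻¹ * (w' : G) := rfl
    rw [hcoe, h7]
    exact mul_mem (hle2 (Subgroup.mem_inf.mpr ⟨hxH, hx_fix⟩))
      (hle1 (Subgroup.mem_inf.mpr ⟨inv_mem hk, hkstab⟩))
  have hsurj : ∀ y : {q : QT K H θ //
      ∃ k ∈ K, ψ = conjAct k (conjAct ((Quotient.out q : ↥H) : G) θ)},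
      ∃ w : ↥W, E w = y := by
    rintro ⟨q, k, hk, hcond⟩
    have hu_stab : h₀⁻¹ * k * ((Quotient.out q : ↥H) : G) ∈ stabSub θ := by
      rw [mem_stabSub]
      calc conjAct (h₀⁻¹ * k * ((Quotient.out q : ↥H) : G)) θ
          = conjAct h₀⁻¹ (conjAct k (conjAct ((Quotient.out q : ↥H) : G) θ)) := by
            rw [show h₀⁻¹ * k * ((Quotient.out q : ↥H) : G)
                = h₀⁻¹ * (k * ((Quotient.out q : ↥H) : G)) by group, conjAct_mul, conjAct_mul]
        _ = conjAct h₀⁻¹ ψ := by rw [← hcond]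
        _ = θ := by rw [hψ, conjAct_inv_cancel]
    have huH : h₀⁻¹ * k * ((Quotient.out q : ↥H) : G) ∈ H :=
      mul_mem (mul_mem (inv_mem h₀H) (hKH hk)) (Quotient.out q).2
    have hwstab : h₀ * (h₀⁻¹ * k * ((Quotient.out q : ↥H) : G))⁻¹ * h₀⁻¹ ∈ stabSub ψ := by
      have h5 := conj_mem_stab (inv_mem hu_stab) h₀
      rw [← hψ] at h5
      exact h5
    have hwH : h₀ * (h₀⁻¹ * k * ((Quotient.out q : ↥H) : G))⁻¹ * h₀⁻¹ ∈ H :=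
      mul_mem (mul_mem h₀H (inv_mem huH)) (inv_mem h₀H)
    refine ⟨⟨h₀ * (h₀⁻¹ * k * ((Quotient.out q : ↥H) : G))⁻¹ * h₀⁻¹,
      Subgroup.mem_inf.mpr ⟨hwH, hwstab⟩⟩, ?_⟩
    apply Subtype.ext
    show Quotient.mk (dcSetoid K H θ) _ = q
    conv_rhs => rw [← Quotient.out_eq q]
    apply Quotient.sound
    refine ⟨k⁻¹, inv_mem hk, 1, one_mem H, map_one θ, ?_⟩
    show ((Quotient.out q : ↥H) : G)
        = k⁻¹ * ((h₀ * (h₀⁻¹ * k * ((Quotient.out q : ↥H) : G))⁻¹ * h₀⁻¹)⁻¹ * h₀) * 1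
    group
  have e : (↥W ⧸ J.subgroupOf W) ≃ {q : QT K H θ //
      ∃ k ∈ K, ψ = conjAct k (conjAct ((Quotient.out q : ↥H) : G) θ)} := by
    refine Equiv.ofBijective (Quotient.lift E hresp) ⟨?_, ?_⟩
    · intro a b
      refine Quotient.inductionOn₂ a b ?_
      intro w w' hww'
      exact Quotient.sound (hinj w w' hww')
    · intro y
      obtain ⟨w, hw⟩ := hsurj y
      exact ⟨Quotient.mk _ w, hw⟩
  rw [← Nat.card_congr e]
  rfl

end AuxE

section AuxF

attribute [local instance] Classical.propDecidable

variable (K H : Subgroup G) (hKH : K ≤ H) (ρ : ↥K →* (V →ₗ[ℂ] V))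
variable (θ : MulAut G) (χ : MulAut G → G → ℂ)
variable (hcompat : ∀ φ ∈ OrbSet H θ, ∀ h ∈ H, ∀ k ∈ H, φ k = k →
  χ (conjAct h φ) (h * k * h⁻¹) = χ φ k)

include hKH hcompat in
lemma homK_conj_mem {φ : MulAut G} (hφ : φ ∈ OrbSet H θ) {k : G} (hk : k ∈ K)
    (μ : V →ₗ[ℂ] ℂ) (hμ : μ ∈ HomK K H ρ (conjAct k φ) (χ (conjAct k φ))) :
    μ.comp (ρ ⟨k, hk⟩) ∈ HomK K H ρ φ (χ φ) := by
  intro a haH hafix v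
  simp only [LinearMap.coe_comp, Function.comp_apply]
  have hsw : (⟨k, hk⟩ : ↥K) * a
      = (⟨k * (a : G) * k⁻¹, mul_mem (mul_mem hk a.2) (inv_mem hk)⟩ : ↥K) * ⟨k, hk⟩ :=
    Subtype.ext (by push_cast; group)
  rw [← Module.End.mul_apply, ← map_mul, hsw, map_mul, Module.End.mul_apply]
  have hfix2 : conjAct k φ (k * (a : G) * k⁻¹) = k * (a : G) * k⁻¹ :=
    mem_fixedSub.mp (conj_mem_fixed (mem_fixedSub.mpr hafix) k)
  have hH2 : k * (a : G) * k⁻¹ ∈ H := mul_mem (mul_mem (hKH hk) haH) (inv_mem (hKH hk))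
  rw [hμ ⟨k * (a : G) * k⁻¹, mul_mem (mul_mem hk a.2) (inv_mem hk)⟩ hH2 hfix2
    (ρ ⟨k, hk⟩ v)]
  rw [hcompat φ hφ k (hKH hk) (a : G) haH hafix]

include hKH hcompat in
lemma homK_conj_mem' {φ : MulAut G} (hφ : φ ∈ OrbSet H θ) {k : G} (hk : k ∈ K)
    (ν : V →ₗ[ℂ] ℂ) (hν : ν ∈ HomK K H ρ φ (χ φ)) :
    ν.comp (ρ ⟨k⁻¹, inv_mem hk⟩) ∈ HomK K H ρ (conjAct k φ) (χ (conjAct k φ)) := by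
  intro a haH hafix v
  simp only [LinearMap.coe_comp, Function.comp_apply]
  have hsw : (⟨k⁻¹, inv_mem hk⟩ : ↥K) * a
      = (⟨k⁻¹ * (a : G) * k, mul_mem (mul_mem (inv_mem hk) a.2) hk⟩ : ↥K)
        * ⟨k⁻¹, inv_mem hk⟩ :=
    Subtype.ext (by push_cast; group)
  rw [← Module.End.mul_apply, ← map_mul, hsw, map_mul, Module.End.mul_apply]
  have hfix2 : φ (k⁻¹ * (a : G) * k) = k⁻¹ * (a : G) * k := by
    have h5 := conj_mem_fixed (mem_fixedSub.mpr hafix) k⁻¹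
    rw [conjAct_inv_cancel, inv_inv] at h5
    exact mem_fixedSub.mp h5
  have hH2 : k⁻¹ * (a : G) * k ∈ H :=
    mul_mem (mul_mem (inv_mem (hKH hk)) haH) (hKH hk)
  rw [hν ⟨k⁻¹ * (a : G) * k, mul_mem (mul_mem (inv_mem hk) a.2) hk⟩ hH2 hfix2
    (ρ ⟨k⁻¹, inv_mem hk⟩ v)]
  have h6 := hcompat φ hφ k (hKH hk) (k⁻¹ * (a : G) * k) hH2 hfix2
  have h7 : k * (k⁻¹ * (a : G) * k) * k⁻¹ = (a : G) := by group
  rw [h7] at h6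
  rw [h6]

include hKH hcompat in
lemma finrank_homK_conj {φ : MulAut G} (hφ : φ ∈ OrbSet H θ) {k : G} (hk : k ∈ K) :
    Module.finrank ℂ ↥(HomK K H ρ (conjAct k φ) (χ (conjAct k φ)))
      = Module.finrank ℂ ↥(HomK K H ρ φ (χ φ)) := by
  refine LinearEquiv.finrank_eq
    { toFun := fun μ => ⟨(μ : V →ₗ[ℂ] ℂ).comp (ρ ⟨k, hk⟩),
        homK_conj_mem K H hKH ρ θ χ hcompat hφ hk μ μ.2⟩
      invFun := fun ν => ⟨(ν : V →ₗ[ℂ] ℂ).comp (ρ ⟨k⁻¹, inv_mem hk⟩),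
        homK_conj_mem' K H hKH ρ θ χ hcompat hφ hk ν ν.2⟩
      map_add' := by
        intro μ ν; apply Subtype.ext
        simp only [Submodule.coe_add, LinearMap.add_comp]
      map_smul' := by
        intro c μ; apply Subtype.ext
        simp only [SetLike.val_smul, LinearMap.smul_comp, RingHom.id_apply]
      left_inv := by
        intro μ; apply Subtype.ext; apply LinearMap.ext; intro v
        show (μ : V →ₗ[ℂ] ℂ) (ρ ⟨k, hk⟩ (ρ ⟨k⁻¹, inv_mem hk⟩ v)) = (μ : V →ₗ[ℂ] ℂ) v
        rw [← Module.End.mul_apply, ← map_mul,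
          show (⟨k, hk⟩ : ↥K) * ⟨k⁻¹, inv_mem hk⟩ = 1 from Subtype.ext (by push_cast; group),
          map_one, Module.End.one_apply]
      right_inv := by
        intro ν; apply Subtype.ext; apply LinearMap.ext; intro v
        show (ν : V →ₗ[ℂ] ℂ) (ρ ⟨k⁻¹, inv_mem hk⟩ (ρ ⟨k, hk⟩ v)) = (ν : V →ₗ[ℂ] ℂ) v
        rw [← Module.End.mul_apply, ← map_mul,
          show (⟨k⁻¹, inv_mem hk⟩ : ↥K) * ⟨k, hk⟩ = 1 from Subtype.ext (by push_cast; group),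
          map_one, Module.End.one_apply] }

include hKH hcompat in
lemma finrank_homK_eq_of_orbit {φ ψ : MulAut G} (hφ : φ ∈ OrbSet H θ) {k : G} (hk : k ∈ K)
    (hco : ψ = conjAct k φ) :
    Module.finrank ℂ ↥(HomK K H ρ φ (χ φ)) = Module.finrank ℂ ↥(HomK K H ρ ψ (χ ψ)) := by
  subst hco
  exact (finrank_homK_conj K H hKH ρ θ χ hcompat hφ hk).symm

end AuxF

set_option maxHeartbeats 1000000 in
/-- **Mackey formula with involutions.**  Let `K ⊆ H` be subgroups of a finite group `G`,
`ρ` an irreducible complex representation of `K`, `ϑ` the `H`-orbit of an order-two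
automorphism `θ` of `G`, and `χ` a compatible family of characters `χ_{θ'} : H^{θ'} → ℂ×`.
Then for any set `R` of representatives of the `K`-orbits contained in `ϑ`,
`dim Hom_{H^θ}(Ind_K^H ρ, χ_θ) = Σ_{θ'∈R} m_K^H(θ') · dim Hom_{K ∩ H^{θ'}}(ρ, χ_{θ'})`,
where `m_K^H(θ') = [H_{θ'} : (K ∩ H_{θ'})H^{θ'}]`. -/
theorem mackey_with_involutions [Fintype G] [FiniteDimensional ℂ V]
    (K H : Subgroup G) (hKH : K ≤ H) (ρ : ↥K →* (V →ₗ[ℂ] V))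
    (hV : Nontrivial V)
    (hirr : ∀ W : Submodule ℂ V, (∀ (k : ↥K), ∀ w ∈ W, ρ k w ∈ W) → W = ⊥ ∨ W = ⊤)
    (θ : MulAut G) (hθ : θ * θ = 1)
    (χ : MulAut G → G → ℂ)
    (hchar : ∀ φ ∈ {ψ : MulAut G | ∃ h ∈ H, ψ = conjAct h θ}, ∀ a b : G,
      a ∈ H → φ a = a → b ∈ H → φ b = b →
        χ φ (a * b) = χ φ a * χ φ b ∧ χ φ a ≠ 0)
    (hcompat : ∀ φ ∈ {ψ : MulAut G | ∃ h ∈ H, ψ = conjAct h θ}, ∀ h ∈ H, ∀ k ∈ H, φ k = k →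
        χ (conjAct h φ) (h * k * h⁻¹) = χ φ k)
    (R : Finset (MulAut G))
    (hRsub : ∀ ψ ∈ R, ψ ∈ {ψ' : MulAut G | ∃ h ∈ H, ψ' = conjAct h θ})
    (hR : ∀ φ ∈ {ψ : MulAut G | ∃ h ∈ H, ψ = conjAct h θ},
      ∃! ψ, ψ ∈ R ∧ ∃ k ∈ K, ψ = conjAct k φ) :
    Module.finrank ℂ ↥(HomInd K H hKH ρ θ (χ θ))
      = ∑ ψ ∈ R, m ψ K H * Module.finrank ℂ ↥(HomK K H ρ ψ (χ ψ)) := by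
  classical
  have hchar' : ∀ φ ∈ OrbSet H θ, ∀ a b : G, a ∈ H → φ a = a → b ∈ H → φ b = b →
      χ φ (a * b) = χ φ a * χ φ b ∧ χ φ a ≠ 0 := hchar
  have hcompat' : ∀ φ ∈ OrbSet H θ, ∀ h ∈ H, ∀ k ∈ H, φ k = k →
      χ (conjAct h φ) (h * k * h⁻¹) = χ φ k := hcompat
  rw [finrank_homInd K H hKH ρ θ χ hchar' hcompat']
  have horb : ∀ q : QT K H θ, conjAct ((Quotient.out q : ↥H) : G) θ ∈ OrbSet H θ :=
    fun q => conj_mem_orb H (theta_mem_orb H θ) (Quotient.out q).2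
  set π : QT K H θ → MulAut G := fun q => (hR _ (horb q)).choose with hπ
  have hπspec : ∀ q : QT K H θ, π q ∈ R ∧
      ∃ k ∈ K, π q = conjAct k (conjAct ((Quotient.out q : ↥H) : G) θ) :=
    fun q => (hR _ (horb q)).choose_spec.1
  have hπuniq : ∀ (q : QT K H θ) (ψ : MulAut G),
      (ψ ∈ R ∧ ∃ k ∈ K, ψ = conjAct k (conjAct ((Quotient.out q : ↥H) : G) θ)) → ψ = π q :=
    fun q ψ h => (hR _ (horb q)).choose_spec.2 ψ h
  rw [← Finset.sum_fiberwise_of_maps_to (g := π) (fun q _ => (hπspec q).1)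
    (fun q : QT K H θ => Module.finrank ℂ
      ↥(HomK K H ρ (conjAct ((Quotient.out q : ↥H) : G) θ)
        (χ (conjAct ((Quotient.out q : ↥H) : G) θ))))]
  apply Finset.sum_congr rfl
  intro ψ hψR
  have hdq : ∀ q ∈ Finset.univ.filter (fun q : QT K H θ => π q = ψ),
      Module.finrank ℂ ↥(HomK K H ρ (conjAct ((Quotient.out q : ↥H) : G) θ)
          (χ (conjAct ((Quotient.out q : ↥H) : G) θ)))
        = Module.finrank ℂ ↥(HomK K H ρ ψ (χ ψ)) := by
    intro q hq
    rw [Finset.mem_filter] at hq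
    obtain ⟨k, hk, hco⟩ := (hπspec q).2
    rw [hq.2] at hco
    exact finrank_homK_eq_of_orbit K H hKH ρ θ χ hcompat' (horb q) hk hco
  rw [Finset.sum_congr rfl hdq, Finset.sum_const, smul_eq_mul]
  obtain ⟨h₀, h₀H, hψeq⟩ := hRsub ψ hψR
  have hcond : ∀ q : QT K H θ, (π q = ψ) ↔
      (∃ k ∈ K, ψ = conjAct k (conjAct ((Quotient.out q : ↥H) : G) θ)) := by
    intro q
    constructor
    · intro hqψ
      obtain ⟨k, hk, hco⟩ := (hπspec q).2
      rw [hqψ] at hco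
      exact ⟨k, hk, hco⟩
    · intro hc
      exact (hπuniq q ψ ⟨hψR, hc⟩).symm
  have hcards : (Finset.univ.filter (fun q : QT K H θ => π q = ψ)).card = m ψ K H := by
    rw [← Fintype.card_subtype, ← Nat.card_eq_fintype_card,
      Nat.card_congr (Equiv.subtypeEquivRight hcond)]
    exact card_fiber K H hKH θ ψ h₀H hψeq
  rw [hcards]

end Stmt7
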